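/- The exponential generating function ∑_{n≥0} a_{n+2} x^n/n! where a_n = 2∑_{k=1}^{n-1} k·S(n-1,k) (with a_2 = 2) equals 2·e^{e^x + 2x - 1}. -/

import Mathlib

open Finset

/-- Stirling numbers of the second kind. -/
def stirling2 : ℕ → ℕ → ℕ
  | 0, 0 => 1
  | 0, _ + 1 => 0
  | _ + 1, 0 => 0
  | n + 1, k + 1 => (k + 1) * stirling2 n (k + 1) + stirling2 n k

lemma stirling2_eq_zero : ∀ {n k : ℕ}, n < k → stirling2 n k = 0
  | 0, _+1, _ => rfl
  | n+1, k+1, h => by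
      rw [stirling2, stirling2_eq_zero (by omega), stirling2_eq_zero (by omega)]
      simp

def bellNum (n : ℕ) : ℕ := ∑ k ∈ range (n+1), stirling2 n k

lemma pow_eq_sum_stirling2 (n m : ℕ) :
    m ^ n = ∑ k ∈ range (n+1), stirling2 n k * m.descFactorial k := by
  induction n with
  | zero => simp [stirling2]
  | succ n ih =>
    have key : ∀ k, m * m.descFactorial k = m.descFactorial (k+1) + k * m.descFactorial k := by
      intro k
      rcases le_or_gt k m with h | h
      · rw [Nat.descFactorial_succ, ← add_mul, Nat.sub_add_cancel h]
      · rw [Nat.descFactorial_eq_zero_iff_lt.2 h,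
          Nat.descFactorial_eq_zero_iff_lt.2 (by omega)]
        simp
    have step1 : m ^ (n+1) = ∑ k ∈ range (n+1),
        (stirling2 n k * m.descFactorial (k+1) + k * stirling2 n k * m.descFactorial k) := by
      calc m ^ (n+1) = ∑ k ∈ range (n+1), stirling2 n k * (m * m.descFactorial k) := by
            rw [pow_succ, ih, sum_mul]
            exact sum_congr rfl fun k _ => by ring
        _ = _ := sum_congr rfl fun k _ => by rw [key]; ring
    rw [step1, sum_add_distrib]
    have h2 : ∑ k ∈ range (n+1), k * stirling2 n k * m.descFactorial k
        = ∑ k ∈ range (n+1), (k+1) * stirling2 n (k+1) * m.descFactorial (k+1) := by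
      rw [sum_range_succ' (fun k => k * stirling2 n k * m.descFactorial k) n,
        sum_range_succ]
      simp [stirling2_eq_zero (Nat.lt_succ_self n)]
    rw [h2, ← sum_add_distrib]
    rw [sum_range_succ' (fun k => stirling2 (n+1) k * m.descFactorial k) (n+1)]
    simp only [stirling2, Nat.descFactorial_zero, zero_mul, add_zero]
    exact sum_congr rfl fun k _ => by ring

lemma stirling2_rec (n k : ℕ) :
    stirling2 (n+1) (k+1) = (k + 1) * stirling2 n (k + 1) + stirling2 n k := rfl

lemma stirling2_zero (n : ℕ) : stirling2 (n+1) 0 = 0 := rfl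

lemma hasSum_exp_real (y : ℝ) : HasSum (fun n : ℕ => y ^ n / n.factorial) (Real.exp y) := by
  rw [Real.exp_eq_exp_ℝ]
  exact NormedSpace.expSeries_div_hasSum_exp (𝔸 := ℝ) y

lemma hasSum_descFactorial (k : ℕ) :
    HasSum (fun m : ℕ => (m.descFactorial k : ℝ) / m.factorial) (Real.exp 1) := by
  have h1 : HasSum (fun n : ℕ => ((n + k).descFactorial k : ℝ) / (n + k).factorial)
      (Real.exp 1) := by
    have := hasSum_exp_real 1
    simp only [one_pow] at this
    convert this using 2 with n
    have hd := Nat.factorial_mul_descFactorial (Nat.le_add_left k n)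
    rw [Nat.add_sub_cancel] at hd
    rw [div_eq_div_iff (by positivity) (by positivity), one_mul]
    rw [← hd]
    push_cast
    ring
  have h2 := (hasSum_nat_add_iff (f := fun m : ℕ => (m.descFactorial k : ℝ) / m.factorial) k).mp h1
  have h3 : ∑ i ∈ range k, ((i.descFactorial k : ℝ) / i.factorial) = 0 := by
    apply Finset.sum_eq_zero
    intro i hi
    rw [Nat.descFactorial_eq_zero_iff_lt.2 (mem_range.mp hi)]
    simp
  rwa [h3, add_zero] at h2

lemma dobinski (n : ℕ) :
    HasSum (fun m : ℕ => (m : ℝ) ^ n / m.factorial) (Real.exp 1 * bellNum n) := by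
  have h := hasSum_sum (s := range (n+1))
    (f := fun k (m : ℕ) => (stirling2 n k : ℝ) * ((m.descFactorial k : ℝ) / m.factorial))
    (a := fun k => (stirling2 n k : ℝ) * Real.exp 1)
    (fun k _ => (hasSum_descFactorial k).mul_left _)
  convert h using 1
  · funext m
    rw [show ((m : ℝ)) ^ n = ((m ^ n : ℕ) : ℝ) by push_cast; ring, pow_eq_sum_stirling2 n m]
    push_cast
    rw [sum_div]
    exact sum_congr rfl fun k _ => by ring
  · rw [bellNum]
    push_cast
    rw [mul_comm, sum_mul]

lemma bell_step (n : ℕ) :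
    bellNum (n+2) = bellNum (n+1) + ∑ k ∈ Icc 1 (n+1), k * stirling2 (n+1) k := by
  have e1 : ∑ k ∈ Icc 1 (n+1), k * stirling2 (n+1) k
      = ∑ k ∈ range (n+2), k * stirling2 (n+1) k := by
    apply Finset.sum_subset
    · intro k hk
      simp only [mem_Icc] at hk
      simp only [mem_range]
      omega
    · intro k _ hk
      simp only [mem_Icc, not_and, not_le] at hk
      have : k = 0 := by
        rcases Nat.eq_zero_or_pos k with h | h
        · exact h
        · exact absurd (hk h) (by simp [mem_range] at *; omega)
      simp [this]
  rw [e1, bellNum, bellNum]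
  rw [sum_range_succ' (fun k => stirling2 (n+2) k) (n+2), stirling2_zero, add_zero]
  have e2 : ∀ k, stirling2 (n+2) (k+1) = (k+1) * stirling2 (n+1) (k+1) + stirling2 (n+1) k :=
    fun k => stirling2_rec (n+1) k
  simp only [e2]
  rw [sum_add_distrib, add_comm]
  congr 1
  · rw [sum_range_succ' (fun k => k * stirling2 (n+1) k) (n+1), zero_mul, add_zero,
      sum_range_succ (fun k => (k+1) * stirling2 (n+1) (k+1)) (n+1),
      stirling2_eq_zero (by omega : n+1 < n+1+1), mul_zero, add_zero]

lemma hasSum_shift (n : ℕ) :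
    HasSum (fun m : ℕ => ((m : ℝ) + 2) ^ n / m.factorial)
      (Real.exp 1 * ((∑ k ∈ Icc 1 (n+1), k * stirling2 (n+1) k : ℕ) : ℝ)) := by
  set F : ℕ → ℝ := fun j => (j : ℝ) ^ (n+2) / j.factorial - (j : ℝ) ^ (n+1) / j.factorial with hF
  have h := (dobinski (n+2)).sub (dobinski (n+1))
  have hFsum : HasSum F (Real.exp 1 * bellNum (n+2) - Real.exp 1 * bellNum (n+1)) := h
  have hval : Real.exp 1 * bellNum (n+2) - Real.exp 1 * bellNum (n+1)
      = Real.exp 1 * ((∑ k ∈ Icc 1 (n+1), k * stirling2 (n+1) k : ℕ) : ℝ) + ∑ i ∈ range 2, F i := by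
    have : ∑ i ∈ range 2, F i = 0 := by
      simp [hF, Finset.sum_range_succ]
    rw [this, add_zero, bell_step n]
    push_cast
    ring
  rw [hval] at hFsum
  have h2 := (hasSum_nat_add_iff (f := F) 2).mpr hFsum
  convert h2 using 2 with m
  · rfl
  have hfac : ((m+2).factorial : ℝ) = ((m:ℝ)+2) * ((m:ℝ)+1) * m.factorial := by
    rw [Nat.factorial_succ, Nat.factorial_succ]
    push_cast
    ring
  have hm : (0:ℝ) < (m.factorial : ℝ) := by positivity
  simp only [hF]
  push_cast
  rw [hfac]
  field_simp
  ring

lemma hasSum_rowsums (y : ℝ) :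
    HasSum (fun m : ℕ => Real.exp (-1) / m.factorial * Real.exp (((m : ℝ) + 2) * y))
      (Real.exp (Real.exp y + 2 * y - 1)) := by
  have base := (hasSum_exp_real (Real.exp y)).mul_left (Real.exp (-1) * Real.exp (2 * y))
  convert base using 1
  · rfl
  · funext m
    rw [show ((m : ℝ) + 2) * y = m * y + 2 * y by ring, Real.exp_add, Real.exp_nat_mul]
    ring
  · rw [← Real.exp_add, ← Real.exp_add]
    congr 1
    ring

set_option maxHeartbeats 2000000 in
theorem egf_avoid_213 (x : ℝ) :
    HasSum (fun n : ℕ =>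
      ((2 * ∑ k ∈ Finset.Icc 1 (n + 1), k * stirling2 (n + 1) k : ℕ) : ℝ)
        * x ^ n / Nat.factorial n)
      (2 * Real.exp (Real.exp x + 2 * x - 1)) := by
  set P : ℕ × ℕ → ℝ := fun p =>
    Real.exp (-1) / p.1.factorial * ((((p.1 : ℝ) + 2) * x) ^ p.2 / p.2.factorial) with hP
  -- row sums
  have hrow : ∀ m : ℕ, HasSum (fun n => P (m, n))
      (Real.exp (-1) / m.factorial * Real.exp (((m : ℝ) + 2) * x)) :=
    fun m => (hasSum_exp_real (((m : ℝ) + 2) * x)).mul_left _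
  -- summability of norms
  have habs : Summable (fun p : ℕ × ℕ => ‖P p‖) := by
    have key : Summable (fun p : ℕ × ℕ =>
        Real.exp (-1) / (p.1.factorial : ℝ) * ((((p.1 : ℝ) + 2) * |x|) ^ p.2 / p.2.factorial)) := by
      refine (summable_prod_of_nonneg ?_).mpr ⟨?_, ?_⟩
      · intro p
        have : (0:ℝ) ≤ (p.1 : ℝ) + 2 := by positivity
        positivity
      · intro m
        dsimp only
        exact ((hasSum_exp_real (((m : ℝ) + 2) * |x|)).mul_left _).summable
      · dsimp only
        have hts : ∀ m : ℕ, ∑' n : ℕ,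
            Real.exp (-1) / (m.factorial : ℝ) * ((((m : ℝ) + 2) * |x|) ^ n / n.factorial)
            = Real.exp (-1) / m.factorial * Real.exp (((m : ℝ) + 2) * |x|) :=
          fun m => ((hasSum_exp_real (((m : ℝ) + 2) * |x|)).mul_left _).tsum_eq
        simp only [hts]
        exact (hasSum_rowsums |x|).summable
    refine key.congr ?_
    intro p
    rw [hP]
    rw [Real.norm_eq_abs, abs_mul, abs_div, abs_div, abs_pow, abs_mul]
    have h1 : |Real.exp (-1)| = Real.exp (-1) := abs_of_pos (Real.exp_pos _)
    have h2 : |((p.1 : ℝ) + 2)| = (p.1 : ℝ) + 2 := abs_of_pos (by positivity)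
    have h3 : |(p.1.factorial : ℝ)| = p.1.factorial := abs_of_pos (by positivity)
    have h4 : |(p.2.factorial : ℝ)| = p.2.factorial := abs_of_pos (by positivity)
    rw [h1, h2, h3, h4]
  have hPsum : HasSum P (∑' p, P p) := (Summable.of_norm habs).hasSum
  have hfib := hPsum.prod_fiberwise hrow
  have huniq : ∑' p, P p = Real.exp (Real.exp x + 2 * x - 1) :=
    hfib.unique (hasSum_rowsums x)
  rw [huniq] at hPsum
  -- swap
  have hswap : HasSum (fun q : ℕ × ℕ => P (q.2, q.1)) (Real.exp (Real.exp x + 2 * x - 1)) :=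
    ((Equiv.prodComm ℕ ℕ).hasSum_iff).mpr hPsum
  -- column sums
  have hcolfib : ∀ n : ℕ, HasSum (fun m => P (m, n))
      (((∑ k ∈ Icc 1 (n+1), k * stirling2 (n+1) k : ℕ) : ℝ) * x ^ n / n.factorial) := by
    intro n
    have h := (hasSum_shift n).mul_left (Real.exp (-1) * x ^ n / n.factorial)
    convert h using 1
    · rfl
    · funext m
      rw [hP]
      simp only
      rw [mul_pow]
      ring
    · rw [show Real.exp (-1) * x ^ n / (n.factorial : ℝ) *
          (Real.exp 1 * ((∑ k ∈ Icc 1 (n+1), k * stirling2 (n+1) k : ℕ) : ℝ))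
          = (Real.exp (-1) * Real.exp 1) *
            (((∑ k ∈ Icc 1 (n+1), k * stirling2 (n+1) k : ℕ) : ℝ) * x ^ n / n.factorial) by ring,
        ← Real.exp_add]
      norm_num
  have hcol : HasSum (fun n : ℕ =>
      ((∑ k ∈ Icc 1 (n+1), k * stirling2 (n+1) k : ℕ) : ℝ) * x ^ n / n.factorial)
      (Real.exp (Real.exp x + 2 * x - 1)) :=
    hswap.prod_fiberwise fun n => hcolfib n
  have := hcol.mul_left 2
  convert this using 2 with n
  · rfl
  push_cast
  ring
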